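/- Let A and B be real symmetric n×n matrices. Then ‖F_A − F_B‖_∞ ≤ rank(A − B)/n, i.e., the supremum over λ ∈ ℝ of |F_A(λ) − F_B(λ)| is at most rank(A − B)/n. -/

import Mathlib

open scoped Matrix

open Finset in
open scoped Classical in
lemma esd_repr_eq_zero_of_mem_span {n : ℕ}
    (b : OrthonormalBasis (Fin n) ℝ (EuclideanSpace ℝ (Fin n))) (s : Set (Fin n))
    {x : EuclideanSpace ℝ (Fin n)} (hx : x ∈ Submodule.span ℝ (b '' s)) {i : Fin n}
    (hi : i ∉ s) : b.repr x i = 0 := by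
  induction hx using Submodule.span_induction with
  | mem y hy =>
    obtain ⟨j, hj, rfl⟩ := hy
    rw [b.repr_self]
    have : i ≠ j := fun h => hi (h ▸ hj)
    simp [EuclideanSpace.single_apply, this]
  | zero => simp
  | add y z _ _ hy hz => simp [hy, hz]
  | smul c y _ hy => simp [hy]

lemma esd_toEuclideanLin_eigen {n : ℕ} {M : Matrix (Fin n) (Fin n) ℝ} (hM : M.IsHermitian)
    (i : Fin n) :
    Matrix.toEuclideanLin M (hM.eigenvectorBasis i) =
      hM.eigenvalues i • hM.eigenvectorBasis i := by
  have h := hM.mulVec_eigenvectorBasis i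
  ext j
  simpa [Matrix.toEuclideanLin_apply] using congrFun h j

open Finset in
lemma esd_inner_toEuclideanLin {n : ℕ} {M : Matrix (Fin n) (Fin n) ℝ} (hM : M.IsHermitian)
    (x : EuclideanSpace ℝ (Fin n)) :
    (inner ℝ x (Matrix.toEuclideanLin M x) : ℝ) =
      ∑ i, hM.eigenvalues i * (hM.eigenvectorBasis.repr x i)^2 := by
  set b := hM.eigenvectorBasis with hb
  nth_rewrite 2 [← b.sum_repr x]
  rw [map_sum, inner_sum]
  refine Finset.sum_congr rfl fun i _ => ?_
  rw [map_smul, esd_toEuclideanLin_eigen hM i, smul_smul, real_inner_smul_right,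
    real_inner_comm, ← b.repr_apply_apply]
  ring

lemma esd_norm_sq {n : ℕ} (b : OrthonormalBasis (Fin n) ℝ (EuclideanSpace ℝ (Fin n)))
    (x : EuclideanSpace ℝ (Fin n)) :
    ‖x‖^2 = ∑ i, (b.repr x i)^2 := by
  rw [← b.repr.norm_map x, EuclideanSpace.norm_eq]
  rw [Real.sq_sqrt (by positivity)]
  simp [sq_abs]

theorem test : True := trivial

lemma esd_finrank_span {n : ℕ} (b : OrthonormalBasis (Fin n) ℝ (EuclideanSpace ℝ (Fin n)))
    (s : Finset (Fin n)) :
    Module.finrank ℝ (Submodule.span ℝ (b '' ↑s)) = s.card := by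
  have hli : LinearIndependent ℝ (fun i : ↥(↑s : Set (Fin n)) => b i) :=
    b.orthonormal.linearIndependent.comp _ Subtype.val_injective
  have h := finrank_span_eq_card hli
  rw [← Set.image_eq_range] at h
  rw [h]
  simp

lemma esd_finrank_ker {n : ℕ} (M : Matrix (Fin n) (Fin n) ℝ) :
    M.rank + Module.finrank ℝ (LinearMap.ker (Matrix.toEuclideanLin M)) = n := by
  have h := LinearMap.finrank_range_add_finrank_ker (Matrix.toEuclideanLin M)
  rw [finrank_euclideanSpace_fin] at h
  suffices hr : Module.finrank ℝ (LinearMap.range (Matrix.toEuclideanLin M)) = M.rank by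
    rw [← hr]; exact h
  set e := WithLp.linearEquiv 2 ℝ (Fin n → ℝ)
  have hcomp : e.toLinearMap ∘ₗ Matrix.toEuclideanLin M = M.mulVecLin ∘ₗ e.toLinearMap := by
    exact LinearMap.ext fun x => rfl
  calc Module.finrank ℝ (LinearMap.range (Matrix.toEuclideanLin M))
      = Module.finrank ℝ (Submodule.map e.toLinearMap (LinearMap.range (Matrix.toEuclideanLin M))) :=
        (LinearEquiv.finrank_map_eq e _).symm
    _ = Module.finrank ℝ (LinearMap.range (e.toLinearMap ∘ₗ Matrix.toEuclideanLin M)) := by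
        rw [LinearMap.range_comp]
    _ = M.rank := by
        rw [hcomp, LinearMap.range_comp, LinearEquiv.range, Submodule.map_top]
        rfl

open Finset in
open scoped Classical in
lemma esd_count_le {n : ℕ} {A B : Matrix (Fin n) (Fin n) ℝ} (hA : A.IsHermitian)
    (hB : B.IsHermitian) (lam : ℝ) :
    (Finset.univ.filter fun i => hA.eigenvalues i ≤ lam).card ≤
      (Finset.univ.filter fun i => hB.eigenvalues i ≤ lam).card + (A - B).rank := by
  set bA := hA.eigenvectorBasis with hbA
  set bB := hB.eigenvectorBasis with hbB
  set sA : Finset (Fin n) := univ.filter (fun i => hA.eigenvalues i ≤ lam) with hsA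
  set sB : Finset (Fin n) := univ.filter (fun i => hB.eigenvalues i ≤ lam) with hsB
  set sB' : Finset (Fin n) := univ.filter (fun i => ¬ hB.eigenvalues i ≤ lam) with hsB'
  set S := Submodule.span ℝ (bA '' ↑sA) with hSdef
  set K := LinearMap.ker (Matrix.toEuclideanLin (A - B)) with hKdef
  set P := Submodule.span ℝ (bB '' ↑sB') with hPdef
  have hS : Module.finrank ℝ S = sA.card := esd_finrank_span bA sA
  have hP : Module.finrank ℝ P = sB'.card := esd_finrank_span bB sB'
  have hK : (A - B).rank + Module.finrank ℝ K = n := esd_finrank_ker _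
  have hsum : sB.card + sB'.card = n := by
    simpa only [Finset.card_univ, Fintype.card_fin] using
      Finset.card_filter_add_card_filter_not
        (s := (univ : Finset (Fin n))) (p := fun i => hB.eigenvalues i ≤ lam)
  have hdisj : Disjoint (S ⊓ K) P := by
    rw [Submodule.disjoint_def]
    intro x hxSK hxP
    by_contra hx0
    obtain ⟨hxS, hxK⟩ := Submodule.mem_inf.mp hxSK
    -- A and B agree on x
    have hEq : Matrix.toEuclideanLin A x = Matrix.toEuclideanLin B x := by
      have h0 : Matrix.toEuclideanLin (A - B) x = 0 := hxK
      rw [map_sub] at h0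
      exact sub_eq_zero.mp h0
    -- quadratic form bounds
    have hAx : (inner ℝ x (Matrix.toEuclideanLin A x) : ℝ) ≤ lam * ‖x‖^2 := by
      rw [esd_inner_toEuclideanLin hA, esd_norm_sq bA x, Finset.mul_sum]
      refine Finset.sum_le_sum fun i _ => ?_
      rcases eq_or_ne (bA.repr x i) 0 with h | h
      · simp [← hbA, h]
      · have hi : i ∈ sA := by
          by_contra hi
          exact h (esd_repr_eq_zero_of_mem_span bA (↑sA) hxS (by simpa using hi))
        have : hA.eigenvalues i ≤ lam := (Finset.mem_filter.mp hi).2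
        nlinarith [sq_nonneg (bA.repr x i)]
    have hBx : lam * ‖x‖^2 < (inner ℝ x (Matrix.toEuclideanLin B x) : ℝ) := by
      rw [esd_inner_toEuclideanLin hB, esd_norm_sq bB x, Finset.mul_sum]
      have hrepr0 : bB.repr x ≠ 0 := by
        intro h
        exact hx0 (by simpa using congrArg bB.repr.symm h)
      obtain ⟨i0, hi0⟩ : ∃ i, bB.repr x i ≠ 0 := by
        by_contra h
        push_neg at h
        exact hrepr0 (by ext i; simpa using h i)
      have hi0' : i0 ∈ sB' := by
        by_contra hi
        exact hi0 (esd_repr_eq_zero_of_mem_span bB (↑sB') hxP (by simpa using hi))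
      refine Finset.sum_lt_sum (fun i _ => ?_) ⟨i0, Finset.mem_univ i0, ?_⟩
      · rcases eq_or_ne (bB.repr x i) 0 with h | h
        · simp [← hbB, h]
        · have hi : i ∈ sB' := by
            by_contra hi
            exact h (esd_repr_eq_zero_of_mem_span bB (↑sB') hxP (by simpa using hi))
          have : lam < hB.eigenvalues i := lt_of_not_ge (Finset.mem_filter.mp hi).2
          nlinarith [sq_nonneg (bB.repr x i)]
      · have : lam < hB.eigenvalues i0 := lt_of_not_ge (Finset.mem_filter.mp hi0').2
        have hsq : 0 < (bB.repr x i0)^2 := by positivity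
        nlinarith
    rw [hEq] at hAx
    linarith
  have h1 := Submodule.finrank_add_finrank_le_of_disjoint hdisj
  rw [finrank_euclideanSpace_fin] at h1
  have h2 := Submodule.finrank_sup_add_finrank_inf_eq S K
  have h3 : Module.finrank ℝ ↥(S ⊔ K) ≤ n := by
    simpa [finrank_euclideanSpace_fin] using Submodule.finrank_le (S ⊔ K)
  omega

lemma esd_rank_sub_comm {n : ℕ} (A B : Matrix (Fin n) (Fin n) ℝ) :
    (B - A).rank = (A - B).rank := by
  have h : (B - A).mulVecLin = -((A - B).mulVecLin) := by
    apply LinearMap.ext; intro x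
    simp [Matrix.mulVecLin_apply, Matrix.sub_mulVec]
  rw [Matrix.rank, Matrix.rank, h, LinearMap.range_neg]

open scoped Classical in
/-- Empirical spectral cumulative distribution function
`F_M(λ) = (1/n) #{i : λ_i(M) ≤ λ}`; junk value `0` for non-Hermitian matrices. -/
noncomputable def esdCDF {ι : Type*} [Fintype ι] [DecidableEq ι]
    (M : Matrix ι ι ℝ) (lam : ℝ) : ℝ :=
  if h : M.IsHermitian then
    ((Finset.univ.filter fun i => h.eigenvalues i ≤ lam).card : ℝ) / (Fintype.card ι)
  else 0

/-- Lemma (Bai): rank inequality for empirical spectral c.d.f.s of symmetric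
matrices: `‖F_A - F_B‖_∞ ≤ rank(A - B)/n`. -/
theorem esdCDF_rank_inequality (n : ℕ) (hn : 0 < n)
    (A B : Matrix (Fin n) (Fin n) ℝ) (hA : A.IsHermitian) (hB : B.IsHermitian) :
    ∀ lam : ℝ, |esdCDF A lam - esdCDF B lam| ≤ ((A - B).rank : ℝ) / n := by
  intro lam
  rw [esdCDF, esdCDF, dif_pos hA, dif_pos hB, Fintype.card_fin]
  have hn' : (0 : ℝ) < n := by exact_mod_cast hn
  have h1 := esd_count_le hA hB lam
  have h2 := esd_count_le hB hA lam
  rw [esd_rank_sub_comm] at h2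
  rw [abs_sub_le_iff]
  constructor
  · rw [div_sub_div_same]
    gcongr
    have : ((Finset.univ.filter fun i => hA.eigenvalues i ≤ lam).card : ℝ) ≤
        ((Finset.univ.filter fun i => hB.eigenvalues i ≤ lam).card : ℝ) + (A - B).rank := by
      exact_mod_cast h1
    linarith
  · rw [div_sub_div_same]
    gcongr
    have : ((Finset.univ.filter fun i => hB.eigenvalues i ≤ lam).card : ℝ) ≤
        ((Finset.univ.filter fun i => hA.eigenvalues i ≤ lam).card : ℝ) + (A - B).rank := by
      exact_mod_cast h2
    linarith
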